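/- Let q > 0, w > 0, N ≥ 2 and let p = q/(q + Nw). Suppose a random variable |Γ| on {1,...,N} satisfies P(|Γ| ≥ h) = (1-p)^{h-1} ∏_{i=1}^{h-1}(1 - i/N). Then ∑_{h=1}^{N-1} P(|Γ| = h) · (q/(q + hw)) · (N - h)/(N - 1) = ∑_{h=1}^{N-1} (q/(q + Nw)) · (Nw/(q + Nw))^{h-1} · ∏_{i=2}^{h}(1 - i/N). -/

import Mathlib

/-- The two-point potential summation identity on the complete graph:
given the survival function of the killed LERW length, the potential sum
reduces to a geometric-weighted product sum. -/
theorem stmt11 (q w : ℝ) (N : ℕ) (hq : 0 < q) (hw : 0 < w) (hN : 2 ≤ N)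
    (P : ℕ → ℝ)
    (hP : ∀ h : ℕ, 1 ≤ h → h ≤ N →
      P h = (1 - q / (q + (N : ℝ) * w)) ^ (h - 1) *
        ∏ i ∈ Finset.Icc 1 (h - 1), (1 - (i : ℝ) / (N : ℝ))) :
    ∑ h ∈ Finset.Icc 1 (N - 1),
      (P h - P (h + 1)) * (q / (q + (h : ℝ) * w)) * (((N : ℝ) - (h : ℝ)) / ((N : ℝ) - 1))
    = ∑ h ∈ Finset.Icc 1 (N - 1),
      (q / (q + (N : ℝ) * w)) * ((N : ℝ) * w / (q + (N : ℝ) * w)) ^ (h - 1) *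
        ∏ i ∈ Finset.Icc 2 h, (1 - (i : ℝ) / (N : ℝ)) := by
  have hN2 : (2:ℝ) ≤ (N:ℝ) := by exact_mod_cast hN
  have hNpos : (0:ℝ) < N := by linarith
  have hN1 : (N:ℝ) - 1 ≠ 0 := by linarith
  have hqN : q + (N:ℝ) * w ≠ 0 := by positivity
  apply Finset.sum_congr rfl
  intro h hh
  rw [Finset.mem_Icc] at hh
  obtain ⟨h1, h2⟩ := hh
  obtain ⟨k, rfl⟩ : ∃ k, h = k + 1 := ⟨h - 1, by omega⟩
  have hhN : k + 1 ≤ N := by omega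
  have hh1N : k + 1 + 1 ≤ N := by omega
  rw [hP (k+1) (by omega) hhN, hP (k+1+1) (by omega) hh1N]
  simp only [Nat.add_sub_cancel]
  have e2 : (∏ i ∈ Finset.Icc 1 (k+1), (1 - (i:ℝ)/N))
      = (∏ i ∈ Finset.Icc 1 k, (1 - (i:ℝ)/N)) * (1 - ((k:ℝ)+1)/N) := by
    rw [Finset.prod_Icc_succ_top (by omega)]
    push_cast
    ring
  have e1 : Finset.Icc 1 (k+1) = insert 1 (Finset.Icc 2 (k+1)) := by
    ext x
    simp only [Finset.mem_Icc, Finset.mem_insert]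
    omega
  have e3 : (∏ i ∈ Finset.Icc 2 (k+1), (1 - (i:ℝ)/N))
      = (∏ i ∈ Finset.Icc 1 k, (1 - (i:ℝ)/N)) * (1 - ((k:ℝ)+1)/N) / (1 - 1/N) := by
    have h1N : (1:ℝ) - 1/N ≠ 0 := by
      have : (1:ℝ)/N < 1 := by
        rw [div_lt_one hNpos]; linarith
      linarith
    rw [← e2, e1, Finset.prod_insert (by simp)]
    push_cast
    field_simp
  rw [e2, e3]
  generalize (∏ i ∈ Finset.Icc 1 k, (1 - (i:ℝ)/N)) = Q
  rw [show (1:ℝ) - q / (q + (N:ℝ) * w) = (N:ℝ) * w / (q + (N:ℝ) * w) by field_simp; ring]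
  have hqh : q + ((k:ℝ)+1) * w ≠ 0 := by positivity
  push_cast
  rw [pow_succ]
  field_simp
  ring
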